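/- Let n ≥ 1, let p ∈ ℝ^n satisfy 0 < p_1 ≤ p_2 ≤ ⋯ ≤ p_n < 1, and let g ∈ ℝ^n. Then γ̃²(p,g) ≥ γ₁²(p,g) / (3 + ln(1/p_1) + ln(1/(1−p_n))) -/

import Mathlib

open Finset


lemma two_mul_le_log_div' (w : ℝ) (h0 : 0 ≤ w) (h1 : w < 1) :
    2 * w ≤ Real.log (1 + w) - Real.log (1 - w) := by
  set F : ℝ → ℝ := fun t => Real.log (1 + t) - Real.log (1 - t) - 2 * t with hF
  have hmono : MonotoneOn F (Set.Icc 0 w) := by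
    have hconv : Convex ℝ (Set.Icc (0:ℝ) w) := convex_Icc 0 w
    have hder : ∀ x ∈ Set.Icc (0:ℝ) w, HasDerivAt F (1/(1+x) - (-1)/(1-x) - 2) x := by
      intro x hx
      obtain ⟨hx0, hxw⟩ := hx
      have h1x : (1:ℝ) + x ≠ 0 := by linarith
      have h2x : (1:ℝ) - x ≠ 0 := by nlinarith [h1.trans_le' hxw]
      have d1 : HasDerivAt (fun t : ℝ => Real.log (1 + t)) (1/(1+x)) x := by
        simpa using (((hasDerivAt_id x).const_add 1).log h1x)
      have d2 : HasDerivAt (fun t : ℝ => Real.log (1 - t)) ((-1)/(1-x)) x := by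
        simpa using (((hasDerivAt_id x).const_sub 1).log h2x)
      have d3 : HasDerivAt (fun t : ℝ => 2 * t) 2 x := by
        simpa using (hasDerivAt_id x).const_mul 2
      exact (d1.sub d2).sub d3
    apply monotoneOn_of_deriv_nonneg hconv
    · exact fun x hx => (hder x hx).continuousAt.continuousWithinAt
    · intro x hx
      have hx' : x ∈ Set.Icc (0:ℝ) w := interior_subset hx
      exact ((hder x hx').differentiableAt).differentiableWithinAt
    · intro x hx
      rw [interior_Icc] at hx
      obtain ⟨hx0, hxw⟩ := hx
      rw [(hder x ⟨hx0.le, hxw.le⟩).deriv]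
      have hx1 : x < 1 := hxw.trans h1
      have e1 : (1:ℝ) - x ≤ 1/(1+x) := by
        rw [le_div_iff₀ (by linarith)]; nlinarith
      have e2 : (1:ℝ) + x ≤ 1/(1-x) := by
        rw [le_div_iff₀ (by linarith)]; nlinarith
      have : (-1:ℝ)/(1-x) = -(1/(1-x)) := by ring
      rw [this]; linarith
  have h0w : (0:ℝ) ∈ Set.Icc (0:ℝ) w := ⟨le_refl _, h0⟩
  have hww : w ∈ Set.Icc (0:ℝ) w := ⟨h0, le_refl _⟩
  have := hmono h0w hww h0
  simp only [hF] at this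
  simp at this
  linarith

lemma log_ratio' {x y : ℝ} (hx : 0 < x) (hxy : x ≤ y) :
    2 * (y - x) / (y + x) ≤ Real.log y - Real.log x := by
  have hy : 0 < y := hx.trans_le hxy
  have hyx : 0 < y + x := by linarith
  set w : ℝ := (y - x) / (y + x) with hw
  have h0 : 0 ≤ w := div_nonneg (by linarith) hyx.le
  have h1 : w < 1 := by rw [div_lt_one hyx]; linarith
  have e1 : 1 + w = 2*y/(y+x) := by
    rw [hw, add_div' _ _ _ hyx.ne']; congr 1; ring
  have e2 : 1 - w = 2*x/(y+x) := by
    rw [hw, sub_div' hyx.ne']; congr 1; ring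
  have key := two_mul_le_log_div' w h0 h1
  rw [e1, e2, Real.log_div (by positivity) (by positivity),
    Real.log_div (by positivity) (by positivity),
    Real.log_mul (by norm_num) hy.ne', Real.log_mul (by norm_num) hx.ne'] at key
  calc 2 * (y - x) / (y + x) = 2 * w := by rw [hw]; ring
  _ ≤ _ := by linarith

lemma key_interval' {a b : ℝ} (ha : 0 < a) (hab : a ≤ b) (hb : b < 1) :
    (Real.sqrt (b * (1 - b)) - Real.sqrt (a * (1 - a))) ^ 2
      ≤ (b - a) * ((Real.log b - Real.log (1 - b)) / 4
          - (Real.log a - Real.log (1 - a)) / 4) := by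
  have hb0 : 0 < b := ha.trans_le hab
  have ha1 : a < 1 := lt_of_le_of_lt hab hb
  have ha' : 0 < 1 - a := by linarith
  have hb' : 0 < 1 - b := by linarith
  set al := Real.sqrt a with hal
  set be := Real.sqrt b with hbe
  set ga := Real.sqrt (1 - a) with hga
  set de := Real.sqrt (1 - b) with hde
  have hal2 : al ^ 2 = a := Real.sq_sqrt ha.le
  have hbe2 : be ^ 2 = b := Real.sq_sqrt hb0.le
  have hga2 : ga ^ 2 = 1 - a := Real.sq_sqrt ha'.le
  have hde2 : de ^ 2 = 1 - b := Real.sq_sqrt hb'.le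
  have halp : 0 < al := Real.sqrt_pos.mpr ha
  have hbep : 0 < be := Real.sqrt_pos.mpr hb0
  have hgap : 0 < ga := Real.sqrt_pos.mpr ha'
  have hdep : 0 < de := Real.sqrt_pos.mpr hb'
  have halbe : al ≤ be := Real.sqrt_le_sqrt hab
  have hdega : de ≤ ga := Real.sqrt_le_sqrt (by linarith)
  have hfa : Real.sqrt (a * (1 - a)) = al * ga := Real.sqrt_mul ha.le _
  have hfb : Real.sqrt (b * (1 - b)) = be * de := Real.sqrt_mul hb0.le _
  set x := al * de with hx
  set y := be * ga with hy
  have hxp : 0 < x := mul_pos halp hdep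
  have hyp : 0 < y := mul_pos hbep hgap
  have hxy : x ≤ y := mul_le_mul halbe hdega hdep.le hbep.le
  have hsum : 0 < y + x := by linarith
  -- (y - x) * (y + x) = b - a
  have hprod : (y - x) * (y + x) = b - a := by
    have : (y - x) * (y + x) = be^2 * ga^2 - al^2 * de^2 := by rw [hx, hy]; ring
    rw [this, hal2, hbe2, hga2, hde2]; ring
  -- log bound
  have hlog := log_ratio' hxp hxy
  have hlogy : Real.log y = (Real.log b + Real.log (1 - a)) / 2 := by
    rw [hy, Real.log_mul hbep.ne' hgap.ne', hbe, hga,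
      Real.log_sqrt hb0.le, Real.log_sqrt ha'.le]; ring
  have hlogx : Real.log x = (Real.log a + Real.log (1 - b)) / 2 := by
    rw [hx, Real.log_mul halp.ne' hdep.ne', hal, hde,
      Real.log_sqrt ha.le, Real.log_sqrt hb'.le]; ring
  have hφ : (y - x) / (y + x)
      ≤ (Real.log b - Real.log (1 - b)) / 4 - (Real.log a - Real.log (1 - a)) / 4 := by
    rw [hlogy, hlogx] at hlog
    have : 2 * (y - x) / (y + x) = 2 * ((y - x) / (y + x)) := by ring
    rw [this] at hlog
    linarith
  -- main quadratic comparison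
  have hsq : (be * de - al * ga) ^ 2 ≤ (y - x) ^ 2 := by
    have e1 : (y - x) ^ 2 - (be * de - al * ga) ^ 2
        = be^2 * ga^2 + al^2 * de^2 - be^2 * de^2 - al^2 * ga^2 := by
      rw [hx, hy]; ring
    have e2 : (y - x) ^ 2 - (be * de - al * ga) ^ 2 = (b - a) ^ 2 := by
      rw [e1, hal2, hbe2, hga2, hde2]; ring
    nlinarith [sq_nonneg (b - a)]
  have hyx2 : (y - x) ^ 2 = (b - a) * ((y - x) / (y + x)) := by
    rw [← hprod]
    field_simp
  calc (Real.sqrt (b * (1 - b)) - Real.sqrt (a * (1 - a))) ^ 2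
      = (be * de - al * ga) ^ 2 := by rw [hfa, hfb]
    _ ≤ (y - x) ^ 2 := hsq
    _ = (b - a) * ((y - x) / (y + x)) := hyx2
    _ ≤ (b - a) * ((Real.log b - Real.log (1 - b)) / 4
          - (Real.log a - Real.log (1 - a)) / 4) :=
        mul_le_mul_of_nonneg_left hφ (by linarith)


set_option maxHeartbeats 1000000 in
/-- For `p ∈ ℝⁿ` with `0 < p₁ ≤ ⋯ ≤ pₙ < 1` and any `g ∈ ℝⁿ`, the modified Gini-weighted
smoothness dominates the L1 Gini-weighted smoothness up to a logarithmic factor: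
`γ̃²(p,g) ≥ γ₁²(p,g) / (3 + ln(1/p₁) + ln(1/(1−pₙ)))`. -/
theorem modified_gini_ge_l1_gini_div_log (n : ℕ) (hn : 1 ≤ n) (p g : ℕ → ℝ)
    (hp1 : 0 < p 1)
    (hmono : ∀ i, 1 ≤ i → i < n → p i ≤ p (i + 1))
    (hpn : p n < 1) :
    (∑ i ∈ Finset.Icc 1 n, p i * (1 - p i) * (g i) ^ 2)
      + 2 * ∑ i ∈ Finset.Icc 1 n, ∑ j ∈ Finset.Icc (i + 1) n,
          p i * (1 - p j) * (g i * g j)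
    ≥ (∑ i ∈ Finset.Icc 1 n, Real.sqrt (p i * (1 - p i)) * g i) ^ 2
        / (3 + Real.log (1 / p 1) + Real.log (1 / (1 - p n))) := by
  -- monotonicity chain
  have hmono2 : ∀ j i, 1 ≤ i → i ≤ j → j ≤ n → p i ≤ p j := by
    intro j
    induction j with
    | zero => intro i h1 h2 h3; omega
    | succ j ih =>
      intro i h1 h2 h3
      rcases Nat.lt_or_ge i (j + 1) with hlt | hge
      · exact le_trans (ih i h1 (by omega) (by omega)) (hmono j (by omega) (by omega))
      · have : i = j + 1 := by omega
        rw [this]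
  have hp1n : p 1 ≤ p n := hmono2 n 1 le_rfl hn le_rfl
  have hpn0 : 0 < p n := lt_of_lt_of_le hp1 hp1n
  have hp11 : p 1 < 1 := lt_of_le_of_lt hp1n hpn
  have hlo : ∀ i, 1 ≤ i → i ≤ n → p 1 ≤ p i := fun i h1 h2 => hmono2 i 1 le_rfl h1 h2
  have hhi : ∀ i, 1 ≤ i → i ≤ n → p i ≤ p n := fun i h1 h2 => hmono2 n i h1 h2 le_rfl
  -- the extended sequence q
  set q : ℕ → ℝ := fun k => if k = 0 then 0 else if k ≤ n then p k else 1 with hqdef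
  have hq0 : q 0 = 0 := by simp [hqdef]
  have hqi : ∀ i, 1 ≤ i → i ≤ n → q i = p i := by
    intro i h1 h2
    simp only [hqdef]
    rw [if_neg (by omega), if_pos h2]
  have hqn1 : q (n + 1) = 1 := by
    simp only [hqdef]
    rw [if_neg (by omega), if_neg (by omega)]
  have hqmono : ∀ k, 1 ≤ k → k ≤ n + 1 → q (k - 1) ≤ q k := by
    intro k h1 h2
    by_cases hk1 : k = 1
    · rw [hk1]
      show q 0 ≤ q 1
      rw [hq0, hqi 1 le_rfl hn]
      exact hp1.le
    by_cases hkn : k ≤ n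
    · rw [hqi k (by omega) hkn, hqi (k - 1) (by omega) (by omega)]
      have := hmono (k - 1) (by omega) (by omega)
      rwa [Nat.sub_add_cancel (by omega)] at this
    · have hk : k = n + 1 := by omega
      rw [hk, hqn1, show n + 1 - 1 = n from by omega, hqi n hn le_rfl]
      exact hpn.le
  -- abbreviations
  set f : ℝ → ℝ := fun t => Real.sqrt (t * (1 - t)) with hfdef
  set ph : ℝ → ℝ := fun t => (Real.log t - Real.log (1 - t)) / 4 with hphdef
  have hf0 : f 0 = 0 := by simp [hfdef]
  have hf1 : f 1 = 0 := by simp [hfdef]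
  set T : ℕ → ℝ := fun k => ∑ i ∈ Icc k n, g i with hTdef
  set m : ℝ := ∑ k ∈ Icc 1 (n + 1), (q k - q (k - 1)) * T k with hmdef
  -- generic sum manipulation tools
  have swap1 : ∀ G : ℕ → ℕ → ℝ,
      ∑ k ∈ Icc 1 (n + 1), ∑ i ∈ Icc k n, G k i
        = ∑ i ∈ Icc 1 n, ∑ k ∈ Icc 1 i, G k i := by
    intro G
    apply Finset.sum_comm'
    intro k i
    simp only [Finset.mem_Icc]
    omega
  have swap2 : ∀ (i0 : ℕ) (G : ℕ → ℕ → ℝ),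
      ∑ k ∈ Icc 1 i0, ∑ j ∈ Icc k n, G k j
        = ∑ j ∈ Icc 1 n, ∑ k ∈ Icc 1 (min i0 j), G k j := by
    intro i0 G
    apply Finset.sum_comm'
    intro k j
    simp only [Finset.mem_Icc]
    omega
  have tel : ∀ (F : ℕ → ℝ) (i : ℕ), ∑ k ∈ Icc 1 i, (F k - F (k - 1)) = F i - F 0 := by
    intro F i
    induction i with
    | zero => simp
    | succ i ih =>
      rw [Finset.sum_Icc_succ_top (by omega : 1 ≤ i + 1), ih]
      simp
  have split_sym : ∀ r : ℕ → ℕ → ℝ, (∀ i j, r i j = r j i) →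
      ∑ i ∈ Icc 1 n, ∑ j ∈ Icc 1 n, r i j
        = ∑ i ∈ Icc 1 n, r i i + 2 * ∑ i ∈ Icc 1 n, ∑ j ∈ Icc (i + 1) n, r i j := by
    intro r hsymm
    have hsplit : ∀ i ∈ Icc 1 n, ∑ j ∈ Icc 1 n, r i j
        = ∑ j ∈ Icc 1 i, r i j + ∑ j ∈ Icc (i + 1) n, r i j := by
      intro i hi
      rw [Finset.mem_Icc] at hi
      have e1 : Icc 1 n = Finset.Ioc 0 n := by ext z; simp; omega
      have e2 : Icc 1 i = Finset.Ioc 0 i := by ext z; simp; omega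
      have e3 : Icc (i + 1) n = Finset.Ioc i n := by ext z; simp
      rw [e1, e2, e3]
      exact (Finset.sum_Ioc_consecutive _ (Nat.zero_le i) hi.2).symm
    rw [Finset.sum_congr rfl hsplit, Finset.sum_add_distrib]
    have hlow : ∑ i ∈ Icc 1 n, ∑ j ∈ Icc 1 i, r i j
        = ∑ i ∈ Icc 1 n, r i i + ∑ i ∈ Icc 1 n, ∑ j ∈ Icc (i + 1) n, r i j := by
      have hswap : ∑ i ∈ Icc 1 n, ∑ j ∈ Icc 1 i, r i j
          = ∑ j ∈ Icc 1 n, ∑ i ∈ Icc j n, r i j := by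
        apply Finset.sum_comm'
        intro i j
        simp only [Finset.mem_Icc]
        omega
      rw [hswap]
      have hins : ∀ j ∈ Icc 1 n, ∑ i ∈ Icc j n, r i j
          = r j j + ∑ i ∈ Icc (j + 1) n, r i j := by
        intro j hj
        rw [Finset.mem_Icc] at hj
        have e : Icc j n = insert j (Icc (j + 1) n) := by ext z; simp; omega
        rw [e, Finset.sum_insert (by simp)]
      rw [Finset.sum_congr rfl hins, Finset.sum_add_distrib]
      congr 1
      apply Finset.sum_congr rfl
      intro j _
      apply Finset.sum_congr rfl
      intro i _
      exact hsymm i j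
    rw [hlow]
    ring
  -- sum of lengths is 1
  have hsumlen : ∑ k ∈ Icc 1 (n + 1), (q k - q (k - 1)) = 1 := by
    rw [tel q (n + 1), hqn1, hq0, sub_zero]
  -- A1 : m = ∑ p i g i
  have hA1 : m = ∑ i ∈ Icc 1 n, p i * g i := by
    have e : ∀ k ∈ Icc 1 (n + 1), (q k - q (k - 1)) * T k
        = ∑ i ∈ Icc k n, (q k - q (k - 1)) * g i := by
      intro k _
      simp only [hTdef]
      rw [Finset.mul_sum]
    rw [hmdef, Finset.sum_congr rfl e, swap1]
    apply Finset.sum_congr rfl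
    intro i hi
    rw [Finset.mem_Icc] at hi
    rw [← Finset.sum_mul, tel q i, hq0, sub_zero, hqi i hi.1 hi.2]
  -- the numerator S
  have hS : ∑ k ∈ Icc 1 (n + 1), (f (q k) - f (q (k - 1))) * T k
      = ∑ i ∈ Icc 1 n, Real.sqrt (p i * (1 - p i)) * g i := by
    have e : ∀ k ∈ Icc 1 (n + 1), (f (q k) - f (q (k - 1))) * T k
        = ∑ i ∈ Icc k n, (f (q k) - f (q (k - 1))) * g i := by
      intro k _
      simp only [hTdef]
      rw [Finset.mul_sum]
    rw [Finset.sum_congr rfl e, swap1]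
    apply Finset.sum_congr rfl
    intro i hi
    rw [Finset.mem_Icc] at hi
    rw [← Finset.sum_mul, tel (fun k => f (q k)) i, hq0, hf0, sub_zero, hqi i hi.1 hi.2]
  -- A2 : second moment
  have hA2 : ∑ k ∈ Icc 1 (n + 1), (q k - q (k - 1)) * T k ^ 2
      = ∑ i ∈ Icc 1 n, ∑ j ∈ Icc 1 n, q (min i j) * (g i * g j) := by
    have e : ∀ k ∈ Icc 1 (n + 1), (q k - q (k - 1)) * T k ^ 2
        = ∑ i ∈ Icc k n, ((q k - q (k - 1)) * T k) * g i := by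
      intro k _
      have hTk : T k = ∑ i ∈ Icc k n, g i := by simp only [hTdef]
      rw [← Finset.mul_sum, ← hTk]
      ring
    rw [Finset.sum_congr rfl e, swap1]
    apply Finset.sum_congr rfl
    intro i hi
    rw [← Finset.sum_mul]
    have hB : ∑ k ∈ Icc 1 i, (q k - q (k - 1)) * T k
        = ∑ j ∈ Icc 1 n, q (min i j) * g j := by
      have e2 : ∀ k ∈ Icc 1 i, (q k - q (k - 1)) * T k
          = ∑ j ∈ Icc k n, (q k - q (k - 1)) * g j := by
        intro k _
        simp only [hTdef]
        rw [Finset.mul_sum]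
      rw [Finset.sum_congr rfl e2, swap2 i]
      apply Finset.sum_congr rfl
      intro j _
      rw [← Finset.sum_mul, tel q (min i j), hq0, sub_zero]
    rw [hB, Finset.sum_mul]
    apply Finset.sum_congr rfl
    intro j _
    ring
  -- split the symmetric double sum
  have hA2b : ∑ i ∈ Icc 1 n, ∑ j ∈ Icc 1 n, q (min i j) * (g i * g j)
      = ∑ i ∈ Icc 1 n, p i * g i ^ 2
        + 2 * ∑ i ∈ Icc 1 n, ∑ j ∈ Icc (i + 1) n, p i * (g i * g j) := by
    rw [split_sym (fun i j => q (min i j) * (g i * g j))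
      (by intro i j
          show q (min i j) * (g i * g j) = q (min j i) * (g j * g i)
          rw [min_comm]; ring)]
    congr 1
    · apply Finset.sum_congr rfl
      intro i hi
      rw [Finset.mem_Icc] at hi
      rw [min_self, hqi i hi.1 hi.2]
      ring
    · congr 1
      apply Finset.sum_congr rfl
      intro i hi
      rw [Finset.mem_Icc] at hi
      apply Finset.sum_congr rfl
      intro j hj
      rw [Finset.mem_Icc] at hj
      rw [min_eq_left (by omega), hqi i hi.1 hi.2]
  -- expansion of m ^ 2
  have hmsq : m ^ 2 = ∑ i ∈ Icc 1 n, p i * g i * (p i * g i)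
      + 2 * ∑ i ∈ Icc 1 n, ∑ j ∈ Icc (i + 1) n, (p i * g i) * (p j * g j) := by
    rw [sq, hA1, Finset.sum_mul_sum]
    exact split_sym (fun i j => (p i * g i) * (p j * g j))
      (by intro i j
          show (p i * g i) * (p j * g j) = (p j * g j) * (p i * g i)
          ring)
  -- the LHS of the goal equals the variance
  set V : ℝ := ∑ k ∈ Icc 1 (n + 1), (q k - q (k - 1)) * (T k - m) ^ 2 with hVdef
  have hVeq : V = ∑ k ∈ Icc 1 (n + 1), (q k - q (k - 1)) * T k ^ 2 - m ^ 2 := by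
    have e : ∀ k ∈ Icc 1 (n + 1), (q k - q (k - 1)) * (T k - m) ^ 2
        = (q k - q (k - 1)) * T k ^ 2
          - (2 * m) * ((q k - q (k - 1)) * T k) + m ^ 2 * (q k - q (k - 1)) := by
      intro k _
      ring
    rw [hVdef, Finset.sum_congr rfl e, Finset.sum_add_distrib, Finset.sum_sub_distrib,
      ← Finset.mul_sum, ← Finset.mul_sum, ← hmdef, hsumlen]
    ring
  have hVLHS : (∑ i ∈ Finset.Icc 1 n, p i * (1 - p i) * (g i) ^ 2)
      + 2 * ∑ i ∈ Finset.Icc 1 n, ∑ j ∈ Finset.Icc (i + 1) n,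
          p i * (1 - p j) * (g i * g j) = V := by
    rw [hVeq, hA2, hA2b, hmsq]
    rw [show ∑ i ∈ Icc 1 n, p i * g i ^ 2 + 2 * ∑ i ∈ Icc 1 n, ∑ j ∈ Icc (i + 1) n, p i * (g i * g j)
        - (∑ i ∈ Icc 1 n, p i * g i * (p i * g i)
          + 2 * ∑ i ∈ Icc 1 n, ∑ j ∈ Icc (i + 1) n, p i * g i * (p j * g j))
      = (∑ i ∈ Icc 1 n, p i * g i ^ 2 - ∑ i ∈ Icc 1 n, p i * g i * (p i * g i))
        + 2 * (∑ i ∈ Icc 1 n, ∑ j ∈ Icc (i + 1) n, p i * (g i * g j)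
          - ∑ i ∈ Icc 1 n, ∑ j ∈ Icc (i + 1) n, p i * g i * (p j * g j)) from by ring]
    rw [← Finset.sum_sub_distrib, ← Finset.sum_sub_distrib]
    congr 1
    · apply Finset.sum_congr rfl
      intro i _
      ring
    · congr 1
      apply Finset.sum_congr rfl
      intro i _
      rw [← Finset.sum_sub_distrib]
      apply Finset.sum_congr rfl
      intro j _
      ring
  -- Cauchy-Schwarz setup
  have hVnn : 0 ≤ V := by
    rw [hVdef]
    apply Finset.sum_nonneg
    intro k hk
    rw [Finset.mem_Icc] at hk
    have := hqmono k hk.1 hk.2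
    exact mul_nonneg (by linarith) (sq_nonneg _)
  set u : ℕ → ℝ := fun k =>
    if q (k - 1) = q k then 0
    else (f (q k) - f (q (k - 1))) / Real.sqrt (q k - q (k - 1)) with hudef
  set v : ℕ → ℝ := fun k => Real.sqrt (q k - q (k - 1)) * (T k - m) with hvdef
  have huv : ∀ k ∈ Icc 1 (n + 1),
      (f (q k) - f (q (k - 1))) * (T k - m) = u k * v k := by
    intro k hk
    rw [Finset.mem_Icc] at hk
    simp only [hudef, hvdef]
    by_cases h : q (k - 1) = q k
    · rw [if_pos h, h]
      ring
    · rw [if_neg h]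
      have hl : 0 < q k - q (k - 1) :=
        lt_of_le_of_ne (by linarith [hqmono k hk.1 hk.2]) (by
          intro hc
          exact h (by linarith))
      have hs : Real.sqrt (q k - q (k - 1)) ≠ 0 := (Real.sqrt_pos.mpr hl).ne'
      field_simp
  have hv2 : ∀ k ∈ Icc 1 (n + 1), v k ^ 2 = (q k - q (k - 1)) * (T k - m) ^ 2 := by
    intro k hk
    rw [Finset.mem_Icc] at hk
    simp only [hvdef]
    rw [mul_pow, Real.sq_sqrt (by linarith [hqmono k hk.1 hk.2])]
  -- recentring the numerator sum
  have hS1 : ∑ k ∈ Icc 1 (n + 1), (f (q k) - f (q (k - 1))) * T k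
      = ∑ k ∈ Icc 1 (n + 1), (f (q k) - f (q (k - 1))) * (T k - m) := by
    have e : ∀ k ∈ Icc 1 (n + 1), (f (q k) - f (q (k - 1))) * T k
        = (f (q k) - f (q (k - 1))) * (T k - m) + (f (q k) - f (q (k - 1))) * m := by
      intro k _
      ring
    rw [Finset.sum_congr rfl e, Finset.sum_add_distrib, ← Finset.sum_mul,
      tel (fun k => f (q k)) (n + 1), hqn1, hq0, hf0, hf1]
    ring
  have hCS : (∑ k ∈ Icc 1 (n + 1), (f (q k) - f (q (k - 1))) * (T k - m)) ^ 2
      ≤ (∑ k ∈ Icc 1 (n + 1), u k ^ 2) * V := by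
    rw [Finset.sum_congr rfl huv]
    calc (∑ k ∈ Icc 1 (n + 1), u k * v k) ^ 2
        ≤ (∑ k ∈ Icc 1 (n + 1), u k ^ 2) * ∑ k ∈ Icc 1 (n + 1), v k ^ 2 :=
          Finset.sum_mul_sq_le_sq_mul_sq _ _ _
      _ = (∑ k ∈ Icc 1 (n + 1), u k ^ 2) * V := by
          rw [Finset.sum_congr rfl hv2, hVdef]
  -- bounding the coefficient sum
  have hu1 : u 1 ^ 2 ≤ 1 := by
    simp only [hudef]
    have h01 : q 0 = q (1 - 1) := by norm_num
    have hq1 : q 1 = p 1 := hqi 1 le_rfl hn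
    rw [show (1 : ℕ) - 1 = 0 from rfl, if_neg (by rw [hq0, hq1]; exact fun hc => hp1.ne hc)]
    rw [hq0, hq1, hf0, sub_zero, div_pow,
      Real.sq_sqrt (by linarith : (0:ℝ) ≤ p 1 - 0)]
    have hfp1 : f (p 1) ^ 2 = p 1 * (1 - p 1) := by
      simp only [hfdef]
      exact Real.sq_sqrt (by nlinarith)
    rw [hfp1, div_le_one (by linarith : (0:ℝ) < p 1 - 0)]
    nlinarith
  have hun : u (n + 1) ^ 2 ≤ 1 := by
    simp only [hudef]
    have hids : (n + 1 : ℕ) - 1 = n := by omega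
    have hq1 : q n = p n := hqi n hn le_rfl
    rw [hids, if_neg (by rw [hq1, hqn1]; exact fun hc => hpn.ne hc)]
    rw [hq1, hqn1, hf1, zero_sub, div_pow, neg_sq,
      Real.sq_sqrt (by linarith : (0:ℝ) ≤ 1 - p n)]
    have hfpn : f (p n) ^ 2 = p n * (1 - p n) := by
      simp only [hfdef]
      exact Real.sq_sqrt (by nlinarith)
    rw [hfpn, div_le_one (by linarith : (0:ℝ) < 1 - p n)]
    nlinarith
  have hmid : ∀ k ∈ Icc 2 n, u k ^ 2 ≤ ph (q k) - ph (q (k - 1)) := by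
    intro k hk
    rw [Finset.mem_Icc] at hk
    have hqk : q k = p k := hqi k (by omega) hk.2
    have hqk1 : q (k - 1) = p (k - 1) := hqi (k - 1) (by omega) (by omega)
    simp only [hudef]
    by_cases h : q (k - 1) = q k
    · rw [if_pos h, h]
      simp
    · rw [if_neg h]
      have hle : q (k - 1) ≤ q k := hqmono k (by omega) (by omega)
      have hl : 0 < q k - q (k - 1) := lt_of_le_of_ne (by linarith) (by
        intro hc; exact h (by linarith))
      have ha : 0 < p (k - 1) := lt_of_lt_of_le hp1 (hlo (k - 1) (by omega) (by omega))
      have hab : p (k - 1) ≤ p k := by rw [← hqk, ← hqk1]; exact hle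
      have hb : p k < 1 := lt_of_le_of_lt (hhi k (by omega) hk.2) hpn
      have key := key_interval' ha hab hb
      rw [div_pow, Real.sq_sqrt hl.le, div_le_iff₀ hl, hqk, hqk1]
      simp only [hfdef, hphdef]
      calc (Real.sqrt (p k * (1 - p k)) - Real.sqrt (p (k - 1) * (1 - p (k - 1)))) ^ 2
          ≤ (p k - p (k - 1)) * ((Real.log (p k) - Real.log (1 - p k)) / 4
              - (Real.log (p (k - 1)) - Real.log (1 - p (k - 1))) / 4) := key
        _ = ((Real.log (p k) - Real.log (1 - p k)) / 4
              - (Real.log (p (k - 1)) - Real.log (1 - p (k - 1))) / 4) * (p k - p (k - 1)) := by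
            ring
  -- splitting off the two boundary terms
  have hUsplit : ∑ k ∈ Icc 1 (n + 1), u k ^ 2
      = u 1 ^ 2 + (u (n + 1) ^ 2 + ∑ k ∈ Icc 2 n, u k ^ 2) := by
    have e1 : Icc 1 (n + 1) = insert 1 (Icc 2 (n + 1)) := by ext z; simp; omega
    have e2 : Icc 2 (n + 1) = insert (n + 1) (Icc 2 n) := by ext z; simp; omega
    rw [e1, Finset.sum_insert (by simp), e2, Finset.sum_insert (by simp)]
  have htel2 : ∑ k ∈ Icc 2 n, (ph (q k) - ph (q (k - 1))) = ph (p n) - ph (p 1) := by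
    have e : Icc 1 n = insert 1 (Icc 2 n) := by ext z; simp; omega
    have t1 := tel (fun k => ph (q k)) n
    rw [e, Finset.sum_insert (by simp)] at t1
    have : ph (q (1 - 1)) = ph (q 0) := by norm_num
    rw [this] at t1
    have hqn : q n = p n := hqi n hn le_rfl
    have hq1 : q 1 = p 1 := hqi 1 le_rfl hn
    rw [← hqn, ← hq1]
    linarith
  -- log positivity facts
  have l3 : Real.log (1 / p 1) = - Real.log (p 1) := by rw [one_div, Real.log_inv]
  have l4 : Real.log (1 / (1 - p n)) = - Real.log (1 - p n) := by rw [one_div, Real.log_inv]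
  have l5 : 0 ≤ Real.log (1 / p 1) := by
    rw [l3]
    linarith [Real.log_nonpos hp1.le hp11.le]
  have l6 : 0 ≤ Real.log (1 / (1 - p n)) := by
    rw [l4]
    linarith [Real.log_nonpos (by linarith : (0:ℝ) ≤ 1 - p n) (by linarith : (1:ℝ) - p n ≤ 1)]
  have hUb : ∑ k ∈ Icc 1 (n + 1), u k ^ 2
      ≤ 3 + Real.log (1 / p 1) + Real.log (1 / (1 - p n)) := by
    have hsum2 : ∑ k ∈ Icc 2 n, u k ^ 2 ≤ ph (p n) - ph (p 1) := by
      rw [← htel2]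
      exact Finset.sum_le_sum hmid
    have hphb : ph (p n) - ph (p 1)
        ≤ (Real.log (1 / p 1) + Real.log (1 / (1 - p n))) / 4 := by
      simp only [hphdef]
      rw [l3, l4]
      have lg1 : Real.log (p n) ≤ 0 := Real.log_nonpos hpn0.le hpn.le
      have lg2 : Real.log (1 - p 1) ≤ 0 :=
        Real.log_nonpos (by linarith) (by linarith)
      linarith
    rw [hUsplit]
    have : (Real.log (1 / p 1) + Real.log (1 / (1 - p n))) / 4
        ≤ Real.log (1 / p 1) + Real.log (1 / (1 - p n)) := by linarith
    linarith
  -- final assembly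
  have hD : 0 < 3 + Real.log (1 / p 1) + Real.log (1 / (1 - p n)) := by linarith
  rw [ge_iff_le, div_le_iff₀ hD, hVLHS]
  calc (∑ i ∈ Icc 1 n, Real.sqrt (p i * (1 - p i)) * g i) ^ 2
      = (∑ k ∈ Icc 1 (n + 1), (f (q k) - f (q (k - 1))) * (T k - m)) ^ 2 := by
        rw [← hS1, hS]
    _ ≤ (∑ k ∈ Icc 1 (n + 1), u k ^ 2) * V := hCS
    _ ≤ (3 + Real.log (1 / p 1) + Real.log (1 / (1 - p n))) * V :=
        mul_le_mul_of_nonneg_right hUb hVnn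
    _ = V * (3 + Real.log (1 / p 1) + Real.log (1 / (1 - p n))) := by ring
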